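/- arXiv:1903.08931 — 3 statements merged into one kernel-verified Lean document; each statement's English description precedes it below -/
import Mathlib

section
/- Let n be a positive integer. Let φ₁, φ₂ be continuous linear functionals on M_n(ℂ) and let e₁, e₂ ∈ M_n(ℂ) be partial isometries with φ₁(e₁) = ‖φ₁‖ and φ₂(e₂) = ‖φ₂‖ (equality in ℂ, the right-hand sides being real). Then there exist a continuous linear functional ψ on M_n(ℂ) with ‖ψ‖ = 1 and a partial isometry e ∈ M_n(ℂ) with ψ(e) = 1 such that for all x ∈ M_n(ℂ): Re φ₁((x xᴴ e₁ + e₁ xᴴ x)/2) + Re φ₂((x xᴴ e₂ + e₂ xᴴ x)/2) ≤ 2 (‖φ₁‖ + ‖φ₂‖) · Re ψ((x xᴴ e + e xᴴ x)/2). -/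
open scoped Matrix.Norms.L2Operator InnerProductSpace
open Matrix

set_option maxHeartbeats 1000000

private lemma SDM.clm_aux (n : ℕ) (T : EuclideanSpace ℂ (Fin n) →L[ℂ] EuclideanSpace ℂ (Fin n))
    (t : ℝ) (ht : 0 ≤ t) (hT : t * (‖T‖ * ‖T‖) ≤ 2) :
    ‖(1 : EuclideanSpace ℂ (Fin n) →L[ℂ] EuclideanSpace ℂ (Fin n)) - (t:ℂ) • (T * star T)‖ ≤ 1 := by
  refine ContinuousLinearMap.opNorm_le_bound _ zero_le_one fun u => ?_
  rw [one_mul]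
  refine le_of_pow_le_pow_left₀ two_ne_zero (norm_nonneg u) ?_
  have happ : ((1 : EuclideanSpace ℂ (Fin n) →L[ℂ] EuclideanSpace ℂ (Fin n)) - (t:ℂ) • (T * star T)) u
      = u - (t:ℂ) • T (ContinuousLinearMap.adjoint T u) := by
    simp [ContinuousLinearMap.sub_apply, ContinuousLinearMap.smul_apply,
      ContinuousLinearMap.mul_apply, ContinuousLinearMap.star_eq_adjoint]
  rw [happ]
  set v := ContinuousLinearMap.adjoint T u with hv
  have hns : ‖u - (t:ℂ) • T v‖ ^ 2
      = ‖u‖ ^ 2 - 2 * Complex.re (inner (𝕜 := ℂ) u ((t:ℂ) • T v)) + ‖(t:ℂ) • T v‖ ^ 2 :=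
    norm_sub_sq (𝕜 := ℂ) u ((t:ℂ) • T v)
  have hinner : Complex.re (inner (𝕜 := ℂ) u ((t:ℂ) • T v)) = t * ‖v‖ ^ 2 := by
    rw [inner_smul_right]
    have : inner (𝕜 := ℂ) u (T v) = inner (𝕜 := ℂ) v v := by
      rw [← ContinuousLinearMap.adjoint_inner_left, hv]
    rw [this, inner_self_eq_norm_sq_to_K (𝕜 := ℂ)]
    simp [Complex.re_ofReal_mul]
    norm_cast
    exact Or.inl rfl
  have hb : ‖(t:ℂ) • T v‖ ≤ t * (‖T‖ * ‖v‖) := by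
    rw [norm_smul]
    simp only [Complex.norm_real, Real.norm_eq_abs, abs_of_nonneg ht]
    exact mul_le_mul_of_nonneg_left (T.le_opNorm v) ht
  have hb2 : ‖(t:ℂ) • T v‖ ^ 2 ≤ t^2 * ‖T‖^2 * ‖v‖^2 := by
    nlinarith [norm_nonneg ((t:ℂ) • T v), norm_nonneg v, norm_nonneg T]
  nlinarith [norm_nonneg v, norm_nonneg T, sq_nonneg (‖v‖), mul_nonneg ht (sq_nonneg ‖v‖)]

private lemma SDM.norm_one_sub_smul (n : ℕ) (y : Matrix (Fin n) (Fin n) ℂ) (t : ℝ)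
    (ht : 0 ≤ t) (hy : t * (‖y‖ * ‖y‖) ≤ 2) :
    ‖(1 : Matrix (Fin n) (Fin n) ℂ) - (t:ℂ) • (y * yᴴ)‖ ≤ 1 := by
  have hmap : Matrix.toEuclideanCLM (𝕜 := ℂ) ((1 : Matrix (Fin n) (Fin n) ℂ) - (t:ℂ) • (y * yᴴ))
      = 1 - (t:ℂ) • (Matrix.toEuclideanCLM (𝕜 := ℂ) y * star (Matrix.toEuclideanCLM (𝕜 := ℂ) y)) := by
    rw [map_sub, _root_.map_one, _root_.map_smul, _root_.map_mul,
      ← Matrix.star_eq_conjTranspose, map_star]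
  rw [Matrix.cstar_norm_def, hmap]
  exact SDM.clm_aux n _ t ht (by rwa [← Matrix.cstar_norm_def])

private lemma SDM.norm_tripotent_le (n : ℕ) (e : Matrix (Fin n) (Fin n) ℂ)
    (he : e * eᴴ * e = e) : ‖e‖ ≤ 1 := by
  have hp : (eᴴ * e) * (eᴴ * e) = eᴴ * e := by
    rw [mul_assoc eᴴ e (eᴴ * e), ← mul_assoc e eᴴ e, he]
  have hstar : star (eᴴ * e) = eᴴ * e := by
    rw [Matrix.star_eq_conjTranspose, conjTranspose_mul, conjTranspose_conjTranspose]
  have h1 : ‖eᴴ * e‖ * ‖eᴴ * e‖ = ‖eᴴ * e‖ := by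
    conv_lhs => rw [← CStarRing.norm_star_mul_self (x := eᴴ * e)]
    rw [hstar, hp]
  have h2 : ‖eᴴ * e‖ ≤ 1 := by nlinarith [norm_nonneg (eᴴ * e)]
  have h3 : ‖e‖ * ‖e‖ = ‖eᴴ * e‖ := by
    rw [← Matrix.star_eq_conjTranspose, CStarRing.norm_star_mul_self]
  nlinarith [norm_nonneg e]

private lemma SDM.key_left (n : ℕ) (φ : Matrix (Fin n) (Fin n) ℂ →L[ℂ] ℂ)
    (e : Matrix (Fin n) (Fin n) ℂ) (he : e * eᴴ * e = e) (hφ : φ e = (‖φ‖ : ℂ))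
    (y : Matrix (Fin n) (Fin n) ℂ) : 0 ≤ (φ (e * (y * yᴴ))).re := by
  set t : ℝ := (‖y‖ * ‖y‖ + 1)⁻¹ with htdef
  have hpos : 0 < ‖y‖ * ‖y‖ + 1 := by positivity
  have ht : 0 < t := by positivity
  have hc : t * (‖y‖ * ‖y‖ + 1) = 1 := inv_mul_cancel₀ hpos.ne'
  have ht2 : t * (‖y‖ * ‖y‖) ≤ 2 := by nlinarith
  have hnorm := SDM.norm_one_sub_smul n y t ht.le ht2
  have he1 := SDM.norm_tripotent_le n e he
  have hkey : (φ (e * ((1 : Matrix (Fin n) (Fin n) ℂ) - (t:ℂ) • (y * yᴴ)))).re ≤ ‖φ‖ := by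
    calc (φ (e * ((1 : Matrix (Fin n) (Fin n) ℂ) - (t:ℂ) • (y * yᴴ)))).re
        ≤ ‖φ (e * ((1 : Matrix (Fin n) (Fin n) ℂ) - (t:ℂ) • (y * yᴴ)))‖ := Complex.re_le_norm _
      _ ≤ ‖φ‖ * ‖e * ((1 : Matrix (Fin n) (Fin n) ℂ) - (t:ℂ) • (y * yᴴ))‖ := φ.le_opNorm _
      _ ≤ ‖φ‖ * (‖e‖ * ‖(1 : Matrix (Fin n) (Fin n) ℂ) - (t:ℂ) • (y * yᴴ)‖) :=
          mul_le_mul_of_nonneg_left (norm_mul_le _ _) (norm_nonneg φ)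
      _ ≤ ‖φ‖ * (1 * 1) := by
          refine mul_le_mul_of_nonneg_left ?_ (norm_nonneg φ)
          exact mul_le_mul he1 hnorm (norm_nonneg _) zero_le_one
      _ = ‖φ‖ := by ring
  have hexp : φ (e * ((1 : Matrix (Fin n) (Fin n) ℂ) - (t:ℂ) • (y * yᴴ)))
      = φ e - (t:ℂ) * φ (e * (y * yᴴ)) := by
    rw [mul_sub, mul_one, map_sub, mul_smul_comm, φ.map_smul, smul_eq_mul]
  rw [hexp, hφ] at hkey
  simp only [Complex.sub_re, Complex.ofReal_re, Complex.re_ofReal_mul] at hkey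
  nlinarith

private lemma SDM.key_right (n : ℕ) (φ : Matrix (Fin n) (Fin n) ℂ →L[ℂ] ℂ)
    (e : Matrix (Fin n) (Fin n) ℂ) (he : e * eᴴ * e = e) (hφ : φ e = (‖φ‖ : ℂ))
    (y : Matrix (Fin n) (Fin n) ℂ) : 0 ≤ (φ ((y * yᴴ) * e)).re := by
  set t : ℝ := (‖y‖ * ‖y‖ + 1)⁻¹ with htdef
  have hpos : 0 < ‖y‖ * ‖y‖ + 1 := by positivity
  have ht : 0 < t := by positivity
  have hc : t * (‖y‖ * ‖y‖ + 1) = 1 := inv_mul_cancel₀ hpos.ne'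
  have ht2 : t * (‖y‖ * ‖y‖) ≤ 2 := by nlinarith
  have hnorm := SDM.norm_one_sub_smul n y t ht.le ht2
  have he1 := SDM.norm_tripotent_le n e he
  have hkey : (φ (((1 : Matrix (Fin n) (Fin n) ℂ) - (t:ℂ) • (y * yᴴ)) * e)).re ≤ ‖φ‖ := by
    calc (φ (((1 : Matrix (Fin n) (Fin n) ℂ) - (t:ℂ) • (y * yᴴ)) * e)).re
        ≤ ‖φ (((1 : Matrix (Fin n) (Fin n) ℂ) - (t:ℂ) • (y * yᴴ)) * e)‖ := Complex.re_le_norm _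
      _ ≤ ‖φ‖ * ‖((1 : Matrix (Fin n) (Fin n) ℂ) - (t:ℂ) • (y * yᴴ)) * e‖ := φ.le_opNorm _
      _ ≤ ‖φ‖ * (‖(1 : Matrix (Fin n) (Fin n) ℂ) - (t:ℂ) • (y * yᴴ)‖ * ‖e‖) :=
          mul_le_mul_of_nonneg_left (norm_mul_le _ _) (norm_nonneg φ)
      _ ≤ ‖φ‖ * (1 * 1) := by
          refine mul_le_mul_of_nonneg_left ?_ (norm_nonneg φ)
          exact mul_le_mul hnorm he1 (norm_nonneg _) zero_le_one
      _ = ‖φ‖ := by ring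
  have hexp : φ (((1 : Matrix (Fin n) (Fin n) ℂ) - (t:ℂ) • (y * yᴴ)) * e)
      = φ e - (t:ℂ) * φ ((y * yᴴ) * e) := by
    rw [sub_mul, one_mul, map_sub, smul_mul_assoc, φ.map_smul, smul_eq_mul]
  rw [hexp, hφ] at hkey
  simp only [Complex.sub_re, Complex.ofReal_re, Complex.re_ofReal_mul] at hkey
  nlinarith

private lemma SDM.entry_le (n : ℕ) (x : Matrix (Fin n) (Fin n) ℂ) (i j : Fin n) :
    ‖x i j‖ ≤ ‖x‖ := by
  classical
  have h := Matrix.l2_opNorm_mulVec x (EuclideanSpace.single j (1:ℂ))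
  rw [EuclideanSpace.norm_single, norm_one, mul_one] at h
  set v : EuclideanSpace ℂ (Fin n) :=
    (EuclideanSpace.equiv (Fin n) ℂ).symm (x *ᵥ (EuclideanSpace.single j (1:ℂ))) with hvdef
  have hvi : v i = x i j := by
    have hv' : v i = (x *ᵥ (EuclideanSpace.single j (1:ℂ) : Fin n → ℂ)) i := rfl
    rw [hv']
    simp [Matrix.mulVec, dotProduct, EuclideanSpace.single_apply]
  have hcoord : ‖v i‖ ≤ ‖v‖ := by
    have hne := EuclideanSpace.norm_eq v
    have hsq : ‖v i‖ ^ 2 ≤ ‖v‖ ^ 2 := by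
      rw [hne, Real.sq_sqrt (by positivity)]
      exact Finset.single_le_sum (f := fun k => ‖v k‖ ^ 2)
        (fun k _ => by positivity) (Finset.mem_univ i)
    exact le_of_pow_le_pow_left₀ two_ne_zero (norm_nonneg v) (by simpa using hsq)
  calc ‖x i j‖ = ‖v i‖ := by rw [hvi]
    _ ≤ ‖v‖ := hcoord
    _ ≤ ‖x‖ := h

private lemma SDM.div_two_re (z : ℂ) : (z / 2).re = z.re / 2 := by
  simp [Complex.div_re, Complex.normSq]

/-- The seminorm-domination theorem for the matrix algebra `M_n(ℂ)`: for any two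
functionals `φ₁, φ₂` with norm-attaining partial isometries `e₁, e₂` (so that
`Re φⱼ((x xᴴ eⱼ + eⱼ xᴴ x)/2) = ‖x‖²_{φⱼ}`), there exist a norm-one functional `ψ` and a
partial isometry `e` with `ψ e = 1` such that
`‖x‖²_{φ₁} + ‖x‖²_{φ₂} ≤ 2(‖φ₁‖+‖φ₂‖)‖x‖²_ψ` for all `x`. -/
theorem seminorm_domination_matrix (n : ℕ) (hn : 0 < n)
    (φ₁ φ₂ : Matrix (Fin n) (Fin n) ℂ →L[ℂ] ℂ)
    (e₁ e₂ : Matrix (Fin n) (Fin n) ℂ)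
    (he₁ : e₁ * e₁ᴴ * e₁ = e₁) (he₂ : e₂ * e₂ᴴ * e₂ = e₂)
    (hφ₁ : φ₁ e₁ = (‖φ₁‖ : ℂ)) (hφ₂ : φ₂ e₂ = (‖φ₂‖ : ℂ)) :
    ∃ (ψ : Matrix (Fin n) (Fin n) ℂ →L[ℂ] ℂ) (e : Matrix (Fin n) (Fin n) ℂ),
      ‖ψ‖ = 1 ∧ e * eᴴ * e = e ∧ ψ e = 1 ∧
      ∀ x : Matrix (Fin n) (Fin n) ℂ,
        ((φ₁ (x * xᴴ * e₁ + e₁ * xᴴ * x)) / 2).re +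
          ((φ₂ (x * xᴴ * e₂ + e₂ * xᴴ * x)) / 2).re ≤
        2 * (‖φ₁‖ + ‖φ₂‖) * ((ψ (x * xᴴ * e + e * xᴴ * x)) / 2).re := by
  classical
  haveI : Nonempty (Fin n) := ⟨⟨0, hn⟩⟩
  set S : ℝ := ‖φ₁‖ + ‖φ₂‖ with hSdef
  rcases eq_or_lt_of_le (by positivity : (0:ℝ) ≤ S) with hS | hS
  · -- degenerate case: both functionals are zero
    have h1 : ‖φ₁‖ = 0 := by
      have := norm_nonneg φ₁; have := norm_nonneg φ₂; linarith [hS.symm]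
    have h2 : ‖φ₂‖ = 0 := by
      have := norm_nonneg φ₁; have := norm_nonneg φ₂; linarith [hS.symm]
    have hz1 : φ₁ = 0 := (ContinuousLinearMap.opNorm_zero_iff _).mp h1
    have hz2 : φ₂ = 0 := (ContinuousLinearMap.opNorm_zero_iff _).mp h2
    -- entry functional ψ x = x 0 0 and tripotent E₀₀
    set i0 : Fin n := ⟨0, hn⟩
    set E : Matrix (Fin n) (Fin n) ℂ := Matrix.single i0 i0 (1:ℂ) with hEdef
    have hEstar : Eᴴ = E := by
      rw [hEdef]
      ext a b
      simp only [Matrix.conjTranspose_apply, Matrix.single, Matrix.of_apply]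
      split_ifs <;> simp <;> tauto
    have hEsq : E * E = E := by
      rw [hEdef]
      ext a b
      simp only [Matrix.mul_apply, Matrix.single, Matrix.of_apply, ite_and]
      rw [Finset.sum_eq_single i0]
      · split_ifs <;> simp <;> tauto
      · intro k _ hk
        split_ifs <;> simp <;> tauto
      · simp
    have hEmul : E * Eᴴ * E = E := by rw [hEstar, hEsq, hEsq]
    have hEnorm : ‖E‖ = 1 := by
      have hstar : Eᴴ * E = E := by rw [hEstar, hEsq]
      have h1' : ‖E‖ * ‖E‖ = ‖E‖ := by
        rw [← Matrix.star_eq_conjTranspose] at hstar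
        rw [← CStarRing.norm_star_mul_self (x := E), hstar]
      have hE0 : E ≠ 0 := by
        intro h
        have h0 : E i0 i0 = (1:ℂ) := by simp [hEdef]
        rw [h] at h0
        simp [Matrix.zero_apply] at h0
      have hn0 : ‖E‖ ≠ 0 := fun h => hE0 (norm_eq_zero.mp h)
      exact mul_right_cancel₀ hn0 (h1'.trans (one_mul ‖E‖).symm)
    let L : Matrix (Fin n) (Fin n) ℂ →ₗ[ℂ] ℂ :=
      { toFun := fun x => x i0 i0
        map_add' := fun a b => rfl
        map_smul' := fun c a => rfl }
    let ψ : Matrix (Fin n) (Fin n) ℂ →L[ℂ] ℂ := L.mkContinuous 1 (fun x => by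
      rw [one_mul]; exact SDM.entry_le n x i0 i0)
    have hψE : ψ E = 1 := by
      show E i0 i0 = 1
      simp [hEdef]
    have hψnorm : ‖ψ‖ = 1 := by
      refine le_antisymm (L.mkContinuous_norm_le zero_le_one (fun x => by
        rw [one_mul]; exact SDM.entry_le n x i0 i0)) ?_
      have := ψ.le_opNorm E
      rw [hψE, hEnorm, mul_one] at this
      simpa using this
    refine ⟨ψ, E, hψnorm, hEmul, hψE, fun x => ?_⟩
    rw [hz1, hz2, hS.symm]
    simp
  · -- main case
    set c : ℝ := (2 * S)⁻¹ with hcdef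
    have hcpos : 0 < c := by positivity
    let R : Matrix (Fin n) (Fin n) ℂ → (Matrix (Fin n) (Fin n) ℂ →L[ℂ] Matrix (Fin n) (Fin n) ℂ) := fun a =>
      (ContinuousLinearMap.mul ℂ (Matrix (Fin n) (Fin n) ℂ)).flip a + ContinuousLinearMap.mul ℂ (Matrix (Fin n) (Fin n) ℂ) a
    let ψ : Matrix (Fin n) (Fin n) ℂ →L[ℂ] ℂ := ((c : ℂ)) • (φ₁.comp (R e₁) + φ₂.comp (R e₂))
    have hψapp : ∀ x : Matrix (Fin n) (Fin n) ℂ, ψ x = (c : ℂ) * (φ₁ (x * e₁ + e₁ * x) + φ₂ (x * e₂ + e₂ * x)) := by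
      intro x
      show (c:ℂ) • (φ₁ (x * e₁ + e₁ * x) + φ₂ (x * e₂ + e₂ * x)) = _
      rw [smul_eq_mul]
    have hne1 := SDM.norm_tripotent_le n e₁ he₁
    have hne2 := SDM.norm_tripotent_le n e₂ he₂
    have hψ1 : ψ (1 : Matrix (Fin n) (Fin n) ℂ) = 1 := by
      rw [hψapp]
      simp only [one_mul, mul_one]
      have : φ₁ (e₁ + e₁) + φ₂ (e₂ + e₂) = ((2 * S : ℝ) : ℂ) := by
        rw [map_add, map_add, hφ₁, hφ₂, hSdef]
        push_cast
        ring
      rw [this, ← Complex.ofReal_mul]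
      norm_cast
      rw [hcdef]
      field_simp
    have hnorm1 : ‖(1 : Matrix (Fin n) (Fin n) ℂ)‖ = 1 := norm_one
    have hψnorm : ‖ψ‖ = 1 := by
      refine le_antisymm ?_ ?_
      · refine ContinuousLinearMap.opNorm_le_bound _ zero_le_one fun x => ?_
        rw [hψapp, one_mul]
        have hb1 : ‖φ₁ (x * e₁ + e₁ * x)‖ ≤ ‖φ₁‖ * (2 * ‖x‖) := by
          calc ‖φ₁ (x * e₁ + e₁ * x)‖ ≤ ‖φ₁‖ * ‖x * e₁ + e₁ * x‖ := φ₁.le_opNorm _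
            _ ≤ ‖φ₁‖ * (2 * ‖x‖) := by
                refine mul_le_mul_of_nonneg_left ?_ (norm_nonneg φ₁)
                calc ‖x * e₁ + e₁ * x‖ ≤ ‖x * e₁‖ + ‖e₁ * x‖ := norm_add_le _ _
                  _ ≤ ‖x‖ * ‖e₁‖ + ‖e₁‖ * ‖x‖ := add_le_add (norm_mul_le _ _) (norm_mul_le _ _)
                  _ ≤ ‖x‖ * 1 + 1 * ‖x‖ := by
                      refine add_le_add ?_ ?_
                      · exact mul_le_mul_of_nonneg_left hne1 (norm_nonneg x)
                      · exact mul_le_mul_of_nonneg_right hne1 (norm_nonneg x)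
                  _ = 2 * ‖x‖ := by ring
        have hb2 : ‖φ₂ (x * e₂ + e₂ * x)‖ ≤ ‖φ₂‖ * (2 * ‖x‖) := by
          calc ‖φ₂ (x * e₂ + e₂ * x)‖ ≤ ‖φ₂‖ * ‖x * e₂ + e₂ * x‖ := φ₂.le_opNorm _
            _ ≤ ‖φ₂‖ * (2 * ‖x‖) := by
                refine mul_le_mul_of_nonneg_left ?_ (norm_nonneg φ₂)
                calc ‖x * e₂ + e₂ * x‖ ≤ ‖x * e₂‖ + ‖e₂ * x‖ := norm_add_le _ _
                  _ ≤ ‖x‖ * ‖e₂‖ + ‖e₂‖ * ‖x‖ := add_le_add (norm_mul_le _ _) (norm_mul_le _ _)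
                  _ ≤ ‖x‖ * 1 + 1 * ‖x‖ := by
                      refine add_le_add ?_ ?_
                      · exact mul_le_mul_of_nonneg_left hne2 (norm_nonneg x)
                      · exact mul_le_mul_of_nonneg_right hne2 (norm_nonneg x)
                  _ = 2 * ‖x‖ := by ring
        calc ‖(c:ℂ) * (φ₁ (x * e₁ + e₁ * x) + φ₂ (x * e₂ + e₂ * x))‖
            = c * ‖φ₁ (x * e₁ + e₁ * x) + φ₂ (x * e₂ + e₂ * x)‖ := by
              rw [norm_mul, Complex.norm_real, Real.norm_eq_abs, abs_of_pos hcpos]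
          _ ≤ c * (‖φ₁ (x * e₁ + e₁ * x)‖ + ‖φ₂ (x * e₂ + e₂ * x)‖) :=
              mul_le_mul_of_nonneg_left (norm_add_le _ _) hcpos.le
          _ ≤ c * (‖φ₁‖ * (2 * ‖x‖) + ‖φ₂‖ * (2 * ‖x‖)) :=
              mul_le_mul_of_nonneg_left (add_le_add hb1 hb2) hcpos.le
          _ = c * (2 * S) * ‖x‖ := by rw [hSdef]; ring
          _ = ‖x‖ := by
              rw [hcdef, inv_mul_cancel₀ (by positivity : (2*S : ℝ) ≠ 0), one_mul]
      · have := ψ.le_opNorm (1 : Matrix (Fin n) (Fin n) ℂ)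
        rw [hψ1, hnorm1, mul_one] at this
        simpa using this
    refine ⟨ψ, (1 : Matrix (Fin n) (Fin n) ℂ), hψnorm, by simp, hψ1, fun x => ?_⟩
    rw [SDM.div_two_re, SDM.div_two_re, SDM.div_two_re]
    have harg : x * xᴴ * (1 : Matrix (Fin n) (Fin n) ℂ) + (1 : Matrix (Fin n) (Fin n) ℂ) * xᴴ * x = x * xᴴ + xᴴ * x := by
      rw [mul_one, one_mul]
    rw [harg, hψapp]
    set P : Matrix (Fin n) (Fin n) ℂ := x * xᴴ with hP
    set Q : Matrix (Fin n) (Fin n) ℂ := xᴴ * x with hQ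
    have hsplit1 : (P + Q) * e₁ + e₁ * (P + Q) = (x * xᴴ * e₁ + e₁ * xᴴ * x) + (Q * e₁ + e₁ * P) := by
      rw [hP, hQ]
      noncomm_ring
    have hsplit2 : (P + Q) * e₂ + e₂ * (P + Q) = (x * xᴴ * e₂ + e₂ * xᴴ * x) + (Q * e₂ + e₂ * P) := by
      rw [hP, hQ]
      noncomm_ring
    rw [hsplit1, hsplit2]
    have k1 : 0 ≤ (φ₁ (e₁ * P)).re := SDM.key_left n φ₁ e₁ he₁ hφ₁ x
    have k2 : 0 ≤ (φ₂ (e₂ * P)).re := SDM.key_left n φ₂ e₂ he₂ hφ₂ x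
    have k3 : 0 ≤ (φ₁ (Q * e₁)).re := by
      have := SDM.key_right n φ₁ e₁ he₁ hφ₁ xᴴ
      rwa [conjTranspose_conjTranspose] at this
    have k4 : 0 ≤ (φ₂ (Q * e₂)).re := by
      have := SDM.key_right n φ₂ e₂ he₂ hφ₂ xᴴ
      rwa [conjTranspose_conjTranspose] at this
    have hre : ((c:ℂ) * (φ₁ (x * xᴴ * e₁ + e₁ * xᴴ * x + (Q * e₁ + e₁ * P)) +
        φ₂ (x * xᴴ * e₂ + e₂ * xᴴ * x + (Q * e₂ + e₂ * P)))).re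
        = c * ((φ₁ (x * xᴴ * e₁ + e₁ * xᴴ * x)).re + (φ₁ (Q * e₁)).re + (φ₁ (e₁ * P)).re +
            (φ₂ (x * xᴴ * e₂ + e₂ * xᴴ * x)).re + (φ₂ (Q * e₂)).re + (φ₂ (e₂ * P)).re) := by
      rw [Complex.re_ofReal_mul]
      simp only [map_add, Complex.add_re]
      ring
    rw [hre]
    have hc2 : 2 * S * c = 1 := by
      rw [hcdef, mul_inv_cancel₀ (by positivity : (2*S : ℝ) ≠ 0)]
    set T : ℝ := (φ₁ (x * xᴴ * e₁ + e₁ * xᴴ * x)).re + (φ₁ (Q * e₁)).re + (φ₁ (e₁ * P)).re +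
        (φ₂ (x * xᴴ * e₂ + e₂ * xᴴ * x)).re + (φ₂ (Q * e₂)).re + (φ₂ (e₂ * P)).re with hT
    have hrw : 2 * S * (c * T / 2) = (2 * S * c) * (T / 2) := by ring
    rw [hrw, hc2, one_mul, hT]
    linarith
end

section
/- Let n be a positive integer, 0 ≤ k ≤ n, and let r ∈ M_n(ℂ) be a fixed projection of rank k. Then there exists a Borel measurable map υ : M_n(ℂ) → M_n(ℂ) such that for every projection q ∈ M_n(ℂ) of rank k, υ(q) is a unitary matrix and r = υ(q)ᴴ q υ(q). -/
open Matrix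

/-- The Borel σ-algebra on `M_n(ℂ)` coming from its (norm) topology. -/
noncomputable instance matrixMeasurableSpace (n : ℕ) : MeasurableSpace (Matrix (Fin n) (Fin n) ℂ) :=
  borel _

instance matrixBorelSpace (n : ℕ) : BorelSpace (Matrix (Fin n) (Fin n) ℂ) := ⟨rfl⟩

open Metric Filter Topology

attribute [local instance] Matrix.normedAddCommGroup

section Helpers

variable {α : Type*} [MeasurableSpace α]

lemma measurable_dfind (p : ℕ → α → Prop) [∀ m a, Decidable (p m a)]
    [∀ a, Decidable (∃ m, p m a)]
    (hp : ∀ m, MeasurableSet {a | p m a}) (g : α → ℕ) (hg : Measurable g) :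
    Measurable (fun a => if h : ∃ m, p m a then Nat.find h else g a) := by
  apply measurable_to_countable'
  intro t
  have : (fun a => if h : ∃ m, p m a then Nat.find h else g a) ⁻¹' {t} =
      ({a | p t a ∧ ∀ m < t, ¬ p m a}) ∪ ({a | ∀ m, ¬ p m a} ∩ g ⁻¹' {t}) := by
    ext a
    simp only [Set.mem_preimage, Set.mem_singleton_iff, Set.mem_union, Set.mem_inter_iff,
      Set.mem_setOf_eq]
    by_cases h : ∃ m, p m a
    · rw [dif_pos h]
      constructor
      · rintro rfl
        exact Or.inl ⟨Nat.find_spec h, fun m hm => Nat.find_min h hm⟩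
      · rintro (⟨h1, h2⟩ | ⟨h1, _⟩)
        · exact (Nat.find_eq_iff h).2 ⟨h1, h2⟩
        · exact absurd h (by simpa using h1)
    · rw [dif_neg h]
      push_neg at h
      constructor
      · rintro rfl
        exact Or.inr ⟨h, rfl⟩
      · rintro (⟨h1, _⟩ | ⟨_, h2⟩)
        · exact absurd h1 (h t)
        · exact h2
  rw [this]
  refine MeasurableSet.union ?_ (MeasurableSet.inter ?_ (hg (measurableSet_singleton t)))
  · have : {a | p t a ∧ ∀ m < t, ¬ p m a} =
        {a | p t a} ∩ ⋂ m ∈ Finset.range t, {a | p m a}ᶜ := by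
      ext a; simp only [Set.mem_setOf_eq, Set.mem_inter_iff, Set.mem_iInter, Set.mem_compl_iff, Finset.mem_range]
    rw [this]
    exact (hp t).inter (MeasurableSet.biInter (Set.to_countable _)
      (fun m _ => (hp m).compl))
  · have : {a | ∀ m, ¬ p m a} = ⋂ m, {a | p m a}ᶜ := by ext a; simp
    rw [this]
    exact MeasurableSet.iInter fun m => (hp m).compl

/-- Measurable selection from closed-valued multifunctions whose "hitting sets" of closed
sets are measurable. -/
lemma exists_measurable_selection {β : Type*} [MetricSpace β] [CompleteSpace β]
    [SecondCountableTopology β] [MeasurableSpace β] [BorelSpace β] [Nonempty β]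
    (F : α → Set β) (hcl : ∀ a, IsClosed (F a))
    (hm : ∀ C : Set β, IsClosed C → MeasurableSet {a | (F a ∩ C).Nonempty}) :
    ∃ g : α → β, Measurable g ∧ ∀ a, (F a).Nonempty → g a ∈ F a := by
  classical
  obtain ⟨D, hD⟩ : ∃ D : ℕ → β, DenseRange D :=
    ⟨TopologicalSpace.denseSeq β, TopologicalSpace.denseRange_denseSeq β⟩
  -- the recursive index function
  let ind : ℕ → α → ℕ := fun j => Nat.rec
    (fun a => if h : ∃ m, (F a ∩ closedBall (D m) 1).Nonempty then Nat.find h else 0)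
    (fun j ih a => if h : ∃ m, (F a ∩ (closedBall (D m) ((1/2 : ℝ)^(j+1)) ∩
        closedBall (D (ih a)) ((1/2 : ℝ)^j))).Nonempty then Nat.find h else ih a) j
  have ind_succ : ∀ j a, ind (j+1) a = if h : ∃ m, (F a ∩ (closedBall (D m) ((1/2 : ℝ)^(j+1)) ∩
      closedBall (D (ind j a)) ((1/2 : ℝ)^j))).Nonempty then Nat.find h else ind j a :=
    fun j a => rfl
  have hmeas : ∀ j, Measurable (ind j) := by
    intro j
    induction j with
    | zero =>
      exact measurable_dfind _ (fun m => hm _ isClosed_closedBall) _ measurable_const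
    | succ j ih =>
      have : ∀ m, MeasurableSet {a | (F a ∩ (closedBall (D m) ((1/2 : ℝ)^(j+1)) ∩
          closedBall (D (ind j a)) ((1/2 : ℝ)^j))).Nonempty} := by
        intro m
        have : {a | (F a ∩ (closedBall (D m) ((1/2 : ℝ)^(j+1)) ∩
            closedBall (D (ind j a)) ((1/2 : ℝ)^j))).Nonempty} =
            ⋃ s : ℕ, (ind j ⁻¹' {s}) ∩ {a | (F a ∩ (closedBall (D m) ((1/2 : ℝ)^(j+1)) ∩
            closedBall (D s) ((1/2 : ℝ)^j))).Nonempty} := by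
          ext a
          simp only [Set.mem_setOf_eq, Set.mem_iUnion, Set.mem_inter_iff, Set.mem_preimage,
            Set.mem_singleton_iff]
          exact ⟨fun h => ⟨ind j a, rfl, h⟩, by rintro ⟨s, rfl, h⟩; exact h⟩
        rw [this]
        exact MeasurableSet.iUnion fun s => (ih (measurableSet_singleton s)).inter
          (hm _ (isClosed_closedBall.inter isClosed_closedBall))
      exact measurable_dfind _ this _ ih
  -- consecutive distances
  have hdist : ∀ j a, dist (D (ind j a)) (D (ind (j+1) a)) ≤ 2 * (1/2 : ℝ)^j := by
    intro j a
    rw [ind_succ]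
    split_ifs with h
    · obtain ⟨x, _, hx1, hx2⟩ := Nat.find_spec h
      calc dist (D (ind j a)) (D (Nat.find h)) ≤ dist (D (ind j a)) x + dist x (D (Nat.find h)) :=
            dist_triangle _ _ _
        _ ≤ (1/2 : ℝ)^j + (1/2 : ℝ)^(j+1) := by
            refine add_le_add ?_ (mem_closedBall.mp hx1)
            rw [dist_comm]; exact mem_closedBall.mp hx2
        _ ≤ 2 * (1/2 : ℝ)^j := by
            rw [pow_succ]
            nlinarith [pow_pos (by norm_num : (0:ℝ) < 1/2) j]
    · simp only [dist_self]
      positivity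
  have hcauchy : ∀ a, CauchySeq (fun j => D (ind j a)) :=
    fun a => cauchySeq_of_le_geometric (1/2) 2 (by norm_num) (fun j => hdist j a)
  -- the limit
  set g : α → β := fun a => limUnder atTop (fun j => D (ind j a)) with hg
  have htend : ∀ a, Tendsto (fun j => D (ind j a)) atTop (𝓝 (g a)) := by
    intro a
    obtain ⟨b, hb⟩ := cauchySeq_tendsto_of_complete (hcauchy a)
    exact tendsto_nhds_limUnder ⟨b, hb⟩
  have gmeas : Measurable g := by
    apply measurable_of_tendsto_metrizable (f := fun j a => D (ind j a))
      (fun j => (measurable_from_top).comp (hmeas j))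
    rw [tendsto_pi_nhds]
    exact htend
  refine ⟨g, gmeas, ?_⟩
  -- invariant: fiber meets the ball around the current center
  intro a ha
  have inv : ∀ j, (F a ∩ closedBall (D (ind j a)) ((1/2 : ℝ)^j)).Nonempty := by
    intro j
    induction j with
    | zero =>
      obtain ⟨x, hx⟩ := ha
      obtain ⟨m, hmx⟩ := Metric.denseRange_iff.mp hD x 1 one_pos
      have h : ∃ m, (F a ∩ closedBall (D m) 1).Nonempty :=
        ⟨m, x, hx, mem_closedBall.mpr hmx.le⟩
      have : ind 0 a = Nat.find h := dif_pos h
      rw [this]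
      simpa using Nat.find_spec h
    | succ j ihj =>
      obtain ⟨x, hxF, hxB⟩ := ihj
      obtain ⟨m, hmx⟩ := Metric.denseRange_iff.mp hD x ((1/2 : ℝ)^(j+1)) (by positivity)
      have h : ∃ m, (F a ∩ (closedBall (D m) ((1/2 : ℝ)^(j+1)) ∩
          closedBall (D (ind j a)) ((1/2 : ℝ)^j))).Nonempty :=
        ⟨m, x, hxF, ⟨mem_closedBall.mpr hmx.le, hxB⟩⟩
      rw [ind_succ, dif_pos h]
      obtain ⟨y, hyF, hy1, _⟩ := Nat.find_spec h
      exact ⟨y, hyF, hy1⟩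
  -- conclude g a ∈ F a
  choose x hxF hxB using inv
  have hxtend : Tendsto x atTop (𝓝 (g a)) := by
    rw [tendsto_iff_dist_tendsto_zero]
    apply squeeze_zero (fun j => dist_nonneg)
      (fun j => (dist_triangle (x j) (D (ind j a)) (g a)).trans
        (add_le_add (mem_closedBall.mp (hxB j)) le_rfl))
    have h1 : Tendsto (fun j => ((1/2 : ℝ)^j)) atTop (𝓝 0) :=
      tendsto_pow_atTop_nhds_zero_of_lt_one (by norm_num) (by norm_num)
    have h2 : Tendsto (fun j => dist (D (ind j a)) (g a)) atTop (𝓝 0) :=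
      tendsto_iff_dist_tendsto_zero.mp (htend a)
    simpa using h1.add h2
  exact (hcl a).mem_of_tendsto hxtend (Eventually.of_forall hxF)

end Helpers

section Exist

variable {n k : ℕ}

lemma proj_conj_diag (hk : k ≤ n) (p : Matrix (Fin n) (Fin n) ℂ)
    (hp2 : p * p = p) (hpH : pᴴ = p) (hrk : p.rank = k) :
    ∃ u : Matrix (Fin n) (Fin n) ℂ, uᴴ * u = 1 ∧ u * uᴴ = 1 ∧
      p = u * diagonal (fun i : Fin n => if (i : ℕ) < k then (1:ℂ) else 0) * uᴴ := by
  classical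
  have hherm : p.IsHermitian := hpH
  set V : Matrix (Fin n) (Fin n) ℂ := ((IsHermitian.eigenvectorUnitary hherm : Matrix.unitaryGroup (Fin n) ℂ) : Matrix (Fin n) (Fin n) ℂ) with hV
  have hV1 : Vᴴ * V = 1 := by
    simpa [Matrix.star_eq_conjTranspose] using
      (Matrix.mem_unitaryGroup_iff'.mp (IsHermitian.eigenvectorUnitary hherm).2)
  have hV2 : V * Vᴴ = 1 := by
    simpa [Matrix.star_eq_conjTranspose] using
      (Matrix.mem_unitaryGroup_iff.mp (IsHermitian.eigenvectorUnitary hherm).2)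
  set e : Fin n → ℝ := hherm.eigenvalues with he
  have hspec : p = V * diagonal (RCLike.ofReal ∘ e) * Vᴴ := by
    simpa [Matrix.star_eq_conjTranspose] using hherm.spectral_theorem
  have h2 : Vᴴ * p * V = diagonal (RCLike.ofReal ∘ e) := by
    simpa [Matrix.star_eq_conjTranspose] using hherm.conjStarAlgAut_star_eigenvectorUnitary
  -- eigenvalues are 0 or 1
  have hidem : ∀ i, e i = 0 ∨ e i = 1 := by
    intro i
    have key : (Vᴴ * p * V) * (Vᴴ * p * V) = Vᴴ * (p * p) * V := by
      calc (Vᴴ * p * V) * (Vᴴ * p * V) = Vᴴ * p * (V * Vᴴ) * (p * V) := by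
            simp only [mul_assoc]
        _ = Vᴴ * (p * p) * V := by rw [hV2]; simp only [mul_one, mul_assoc]
    rw [hp2, h2] at key
    have := congrArg (fun A => A i i) key
    simp only [diagonal_mul_diagonal, diagonal_apply_eq, Function.comp_apply,
      Pi.mul_apply] at this
    have hre : e i * e i = e i := by exact_mod_cast this
    rcases mul_eq_zero.mp (show e i * (e i - 1) = 0 by nlinarith) with h | h
    · exact Or.inl h
    · exact Or.inr (by linarith [sub_eq_zero.mp h])
  -- cardinalities
  have hcardP : Fintype.card {i : Fin n // e i ≠ 0} = k := by
    rw [← hrk, hherm.rank_eq_card_non_zero_eigs]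
  have hcardQ : Fintype.card {i : Fin n // (i : ℕ) < k} = k := by
    have : {i : Fin n // (i : ℕ) < k} ≃ Fin k :=
      { toFun := fun x => ⟨x.1.1, x.2⟩
        invFun := fun j => ⟨⟨j.1, lt_of_lt_of_le j.2 hk⟩, j.2⟩
        left_inv := fun x => Subtype.ext (Fin.ext rfl)
        right_inv := fun j => rfl }
    rw [Fintype.card_congr this, Fintype.card_fin]
  have e1 : {i : Fin n // (i : ℕ) < k} ≃ {i : Fin n // e i ≠ 0} :=
    Fintype.equivOfCardEq (by rw [hcardP, hcardQ])
  have e2 : {i : Fin n // ¬ ((i : ℕ) < k)} ≃ {i : Fin n // ¬ (e i ≠ 0)} :=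
    Fintype.equivOfCardEq (by
      rw [Fintype.card_subtype_compl, Fintype.card_subtype_compl, hcardP, hcardQ])
  set σ : Equiv.Perm (Fin n) :=
    ((Equiv.sumCompl (fun i : Fin n => (i : ℕ) < k)).symm.trans
      ((Equiv.sumCongr e1 e2).trans (Equiv.sumCompl (fun i : Fin n => e i ≠ 0)))) with hσdef
  have hσ : ∀ i : Fin n, (RCLike.ofReal ∘ e) (σ i) =
      (if (i : ℕ) < k then (1:ℂ) else 0) := by
    intro i
    by_cases hQ : (i : ℕ) < k
    · have hmem : e (σ i) ≠ 0 := by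
        have : σ i = ((Equiv.sumCompl (fun i : Fin n => e i ≠ 0))
            (Equiv.sumCongr e1 e2 ((Equiv.sumCompl (fun i : Fin n => (i : ℕ) < k)).symm i))) := rfl
        rw [this, Equiv.sumCompl_symm_apply_of_pos (p := fun j : Fin n => (j:ℕ) < k) hQ]
        simp only [Equiv.sumCongr_apply, Sum.map_inl, Equiv.sumCompl_apply_inl]
        exact (e1 ⟨i, hQ⟩).2
      have : e (σ i) = 1 := (hidem (σ i)).resolve_left hmem
      simp [this, hQ]
    · have hmem : ¬ (e (σ i) ≠ 0) := by
        have : σ i = ((Equiv.sumCompl (fun i : Fin n => e i ≠ 0))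
            (Equiv.sumCongr e1 e2 ((Equiv.sumCompl (fun i : Fin n => (i : ℕ) < k)).symm i))) := rfl
        rw [this, Equiv.sumCompl_symm_apply_of_neg (p := fun j : Fin n => (j:ℕ) < k) hQ]
        simp only [Equiv.sumCongr_apply, Sum.map_inr, Equiv.sumCompl_apply_inr]
        exact (e2 ⟨i, hQ⟩).2
      push_neg at hmem
      simp [hmem, hQ]
  -- the permutation matrix
  set T : Matrix (Fin n) (Fin n) ℂ := (1 : Matrix (Fin n) (Fin n) ℂ).submatrix σ id with hT
  have hTH : Tᴴ = (1 : Matrix (Fin n) (Fin n) ℂ).submatrix id σ := by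
    rw [hT, conjTranspose_submatrix, conjTranspose_one]
  have hTunit1 : T * Tᴴ = 1 := by
    rw [hT, hTH]
    have := submatrix_mul_equiv (1 : Matrix (Fin n) (Fin n) ℂ) (1 : Matrix (Fin n) (Fin n) ℂ)
      σ (Equiv.refl (Fin n)) (σ : Fin n → Fin n)
    simp only [Equiv.coe_refl] at this
    rw [this, one_mul, submatrix_one_equiv]
  have hTunit2 : Tᴴ * T = 1 := by
    rw [hT, hTH]
    have := submatrix_mul_equiv (1 : Matrix (Fin n) (Fin n) ℂ) (1 : Matrix (Fin n) (Fin n) ℂ)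
      id σ (id : Fin n → Fin n)
    rw [this, one_mul]
    simp
  -- conjugating the diagonal
  have hdiagconj : diagonal (fun i : Fin n => if (i : ℕ) < k then (1:ℂ) else 0)
      = T * diagonal (RCLike.ofReal ∘ e) * Tᴴ := by
    have hTD : T * diagonal (RCLike.ofReal ∘ e)
        = (diagonal (RCLike.ofReal ∘ e)).submatrix σ id := by
      rw [hT]
      have := one_submatrix_mul (e₁ := (σ : Fin n → Fin n)) (e₂ := Equiv.refl (Fin n))
        (diagonal (RCLike.ofReal ∘ e) : Matrix (Fin n) (Fin n) ℂ)
      simpa using this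
    have h1 : T * diagonal (RCLike.ofReal ∘ e) * Tᴴ
        = (diagonal (RCLike.ofReal ∘ e)).submatrix σ σ := by
      rw [hTD, hTH]
      have := mul_submatrix_one (e₁ := Equiv.refl (Fin n)) (e₂ := (σ : Fin n → Fin n))
        ((diagonal (RCLike.ofReal ∘ e) : Matrix (Fin n) (Fin n) ℂ).submatrix σ id)
      simpa [submatrix_submatrix] using this
    rw [h1, submatrix_diagonal_equiv]
    exact congrArg Matrix.diagonal (funext fun i => (hσ i).symm)
  refine ⟨V * Tᴴ, ?_, ?_, ?_⟩
  · calc (V * Tᴴ)ᴴ * (V * Tᴴ) = T * (Vᴴ * V) * Tᴴ := by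
          simp only [conjTranspose_mul, conjTranspose_conjTranspose, mul_assoc]
      _ = 1 := by rw [hV1, mul_one, hTunit1]
  · calc (V * Tᴴ) * (V * Tᴴ)ᴴ = V * (Tᴴ * T) * Vᴴ := by
          simp only [conjTranspose_mul, conjTranspose_conjTranspose, mul_assoc]
      _ = 1 := by rw [hTunit2, mul_one, hV2]
  · calc p = V * diagonal (RCLike.ofReal ∘ e) * Vᴴ := hspec
      _ = V * (Tᴴ * (T * diagonal (RCLike.ofReal ∘ e) * Tᴴ) * T) * Vᴴ := by
          rw [show Tᴴ * (T * diagonal (RCLike.ofReal ∘ e) * Tᴴ) * T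
              = (Tᴴ * T) * diagonal (RCLike.ofReal ∘ e) * (Tᴴ * T) by simp only [mul_assoc],
            hTunit2, one_mul, mul_one]
      _ = (V * Tᴴ) * diagonal (fun i : Fin n => if (i : ℕ) < k then (1:ℂ) else 0) * (V * Tᴴ)ᴴ := by
          rw [← hdiagconj]
          simp only [conjTranspose_mul, conjTranspose_conjTranspose, mul_assoc]

end Exist

/-- Borel measurable choice of unitaries conjugating each rank-`k` projection onto a fixed
rank-`k` projection `r`. -/
theorem measurable_unitary_conjugation_of_projections (n k : ℕ) (hk : k ≤ n)
    (r : Matrix (Fin n) (Fin n) ℂ) (hr : r * r = r) (hr' : rᴴ = r) (hrank : r.rank = k) :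
    ∃ υ : Matrix (Fin n) (Fin n) ℂ → Matrix (Fin n) (Fin n) ℂ,
      Measurable υ ∧
      ∀ q : Matrix (Fin n) (Fin n) ℂ, q * q = q → qᴴ = q → q.rank = k →
        (υ q)ᴴ * υ q = 1 ∧ υ q * (υ q)ᴴ = 1 ∧ r = (υ q)ᴴ * q * υ q := by
  classical
  letI : ProperSpace (Matrix (Fin n) (Fin n) ℂ) :=
    show ProperSpace (Fin n → Fin n → ℂ) from inferInstance
  letI : SecondCountableTopology (Matrix (Fin n) (Fin n) ℂ) :=
    show SecondCountableTopology (Fin n → Fin n → ℂ) from inferInstance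
  haveI hBorel : @BorelSpace (Matrix (Fin n) (Fin n) ℂ) PseudoMetricSpace.toUniformSpace.toTopologicalSpace
    (matrixMeasurableSpace n) := ⟨rfl⟩
  set F : Matrix (Fin n) (Fin n) ℂ → Set (Matrix (Fin n) (Fin n) ℂ) :=
    fun q => {u | uᴴ * u = 1 ∧ u * uᴴ = 1 ∧ u * r * uᴴ = q} with hF
  have hcont : Continuous (fun u : Matrix (Fin n) (Fin n) ℂ => u * r * uᴴ) :=
    (continuous_id.matrix_mul continuous_const).matrix_mul continuous_id.matrix_conjTranspose
  have hc1 : Continuous (fun u : Matrix (Fin n) (Fin n) ℂ => uᴴ * u) :=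
    continuous_id.matrix_conjTranspose.matrix_mul continuous_id
  have hc2 : Continuous (fun u : Matrix (Fin n) (Fin n) ℂ => u * uᴴ) :=
    continuous_id.matrix_mul continuous_id.matrix_conjTranspose
  have hcl : ∀ q, IsClosed (F q) := by
    intro q
    rw [hF]
    simp only [Set.setOf_and]
    exact (isClosed_eq hc1 continuous_const).inter
      ((isClosed_eq hc2 continuous_const).inter (isClosed_eq hcont continuous_const))
  -- the unitary group is compact
  set K : Set (Matrix (Fin n) (Fin n) ℂ) := {u | uᴴ * u = 1 ∧ u * uᴴ = 1} with hKdef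
  have hKcl : IsClosed K := by
    rw [hKdef]
    simp only [Set.setOf_and]
    exact (isClosed_eq hc1 continuous_const).inter (isClosed_eq hc2 continuous_const)
  have hKsub : K ⊆ closedBall 0 1 := by
    rintro u ⟨h1, _⟩
    rw [mem_closedBall, dist_zero_right, Matrix.norm_le_iff zero_le_one]
    intro i j
    have hd : (uᴴ * u) j j = 1 := by rw [h1]; simp [Matrix.one_apply]
    rw [Matrix.mul_apply] at hd
    have hterm : ∀ l, uᴴ j l * u l j = (Complex.normSq (u l j) : ℂ) := by
      intro l
      rw [conjTranspose_apply, mul_comm]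
      exact Complex.mul_conj (u l j)
    have hsum : (↑(∑ l, Complex.normSq (u l j)) : ℂ) = 1 := by
      rw [← hd]
      push_cast
      exact (Finset.sum_congr rfl fun l _ => (hterm l).symm)
    have hsumR : ∑ l, Complex.normSq (u l j) = 1 := by exact_mod_cast hsum
    have hle : Complex.normSq (u i j) ≤ 1 := by
      rw [← hsumR]
      exact Finset.single_le_sum (f := fun l => Complex.normSq (u l j))
        (fun l _ => Complex.normSq_nonneg _) (Finset.mem_univ i)
    have hnormsq : ‖u i j‖ ^ 2 = Complex.normSq (u i j) := by
      rw [Complex.sq_norm]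
    nlinarith [norm_nonneg (u i j)]
  have hK : IsCompact K :=
    Metric.isCompact_of_isClosed_isBounded hKcl
      ((Metric.isBounded_closedBall (x := (0 : Matrix (Fin n) (Fin n) ℂ)) (r := 1)).subset hKsub)
  -- hitting sets of closed sets are measurable
  have hm : ∀ C : Set (Matrix (Fin n) (Fin n) ℂ), IsClosed C →
      MeasurableSet {q | (F q ∩ C).Nonempty} := by
    intro C hC
    have himg : {q | (F q ∩ C).Nonempty} = (fun u => u * r * uᴴ) '' (K ∩ C) := by
      ext q
      constructor
      · rintro ⟨u, ⟨h1, h2, h3⟩, hu⟩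
        exact ⟨u, ⟨⟨h1, h2⟩, hu⟩, h3⟩
      · rintro ⟨u, ⟨⟨h1, h2⟩, hu⟩, h3⟩
        exact ⟨u, ⟨h1, h2, h3⟩, hu⟩
    rw [himg]
    exact (((hK.inter_right hC).image hcont).isClosed).measurableSet
  obtain ⟨g, hg, hsel⟩ := exists_measurable_selection F hcl hm
  refine ⟨g, hg, ?_⟩
  intro q hq2 hqH hqrank
  -- the fiber is nonempty
  have hne : (F q).Nonempty := by
    obtain ⟨uq, huq1, huq2, huq3⟩ := proj_conj_diag hk q hq2 hqH hqrank
    obtain ⟨ur, hur1, hur2, hur3⟩ := proj_conj_diag hk r hr hr' hrank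
    refine ⟨uq * urᴴ, ?_, ?_, ?_⟩
    · calc (uq * urᴴ)ᴴ * (uq * urᴴ) = ur * ((uqᴴ * uq) * urᴴ) := by
            simp only [conjTranspose_mul, conjTranspose_conjTranspose, mul_assoc]
        _ = 1 := by rw [huq1, one_mul, hur2]
    · calc (uq * urᴴ) * (uq * urᴴ)ᴴ = uq * ((urᴴ * ur) * uqᴴ) := by
            simp only [conjTranspose_mul, conjTranspose_conjTranspose, mul_assoc]
        _ = 1 := by rw [hur1, one_mul, huq2]
    · calc (uq * urᴴ) * r * (uq * urᴴ)ᴴ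
          = uq * ((urᴴ * ur) * (diagonal (fun i : Fin n => if (i : ℕ) < k then (1:ℂ) else 0) *
            ((urᴴ * ur) * uqᴴ))) := by
            rw [hur3]
            simp only [conjTranspose_mul, conjTranspose_conjTranspose, mul_assoc]
        _ = uq * diagonal (fun i : Fin n => if (i : ℕ) < k then (1:ℂ) else 0) * uqᴴ := by
            rw [hur1, one_mul, one_mul]
            simp only [mul_assoc]
        _ = q := huq3.symm
  obtain ⟨h1, h2, h3⟩ := hsel q hne
  refine ⟨h1, h2, ?_⟩
  calc r = 1 * r * 1 := by rw [one_mul, mul_one]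
    _ = ((g q)ᴴ * g q) * r * ((g q)ᴴ * g q) := by rw [h1]
    _ = (g q)ᴴ * (g q * r * (g q)ᴴ) * g q := by simp only [mul_assoc]
    _ = (g q)ᴴ * q * g q := by rw [h3]
end

section
/- Let (Ω, Σ) be a measurable space, n a positive integer, and f : Ω → M_n(ℂ) a measurable map such that f(ω) is a projection for every ω ∈ Ω. For each k ∈ {0, 1, …, n} let r_k ∈ M_n(ℂ) be a fixed projection of rank k (with r₀ = 0 and r_n = 1). Then there exists a measurable map u : Ω → M_n(ℂ) such that u(ω) is unitary for every ω ∈ Ω and u(ω)ᴴ f(ω) u(ω) = r_{rank f(ω)} for every ω ∈ Ω; in particular u(ω)ᴴ f(ω) u(ω) ∈ {0, r₁, …, r_{n−1}, 1} for all ω. -/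
open Matrix

noncomputable instance euclideanMeasurableSpaceC (n : ℕ) :
    MeasurableSpace (EuclideanSpace ℂ (Fin n)) := borel _

instance euclideanBorelSpaceC (n : ℕ) : BorelSpace (EuclideanSpace ℂ (Fin n)) := ⟨rfl⟩

namespace ProjTriv

open Finset Submodule InnerProductSpace

variable {n : ℕ}

/-- The `i`-th column of `a` as a vector of `EuclideanSpace ℂ (Fin n)`, with zero
beyond index `n` (indexed by `ℕ`). -/
noncomputable def col (n : ℕ) (a : Matrix (Fin n) (Fin n) ℂ) (i : ℕ) :
    EuclideanSpace ℂ (Fin n) :=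
  if h : i < n then (WithLp.equiv 2 (Fin n → ℂ)).symm (fun j => a j ⟨i, h⟩) else 0

/-- Normalized Gram-Schmidt of the columns of `a`. -/
noncomputable def gsn (n : ℕ) (a : Matrix (Fin n) (Fin n) ℂ) : ℕ → EuclideanSpace ℂ (Fin n) :=
  gramSchmidtNormed ℂ (col n a)

open scoped Classical in
/-- The set of indices where the normalized Gram-Schmidt of the columns is nonzero. -/
noncomputable def pat (n : ℕ) (a : Matrix (Fin n) (Fin n) ℂ) : Finset ℕ :=
  (Finset.range n).filter (fun i => gsn n a i ≠ 0)

/-- For fixed `s t`, the candidate unitary whose first `s.card` columns are the nonzero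
Gram-Schmidt vectors of the columns of `a` and remaining columns those of `1 - a`. -/
noncomputable def Gaux (n : ℕ) (s t : Finset ℕ) (a : Matrix (Fin n) (Fin n) ℂ) :
    Matrix (Fin n) (Fin n) ℂ :=
  Matrix.of fun i j =>
    if h : (j : ℕ) < s.card then gsn n a (s.orderEmbOfFin rfl ⟨(j : ℕ), h⟩) i
    else if h2 : (j : ℕ) - s.card < t.card then
      gsn n (1 - a) (t.orderEmbOfFin rfl ⟨(j : ℕ) - s.card, h2⟩) i
    else 0

/-- The measurable field of trivializing unitaries. -/
noncomputable def G (n : ℕ) (a : Matrix (Fin n) (Fin n) ℂ) : Matrix (Fin n) (Fin n) ℂ :=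
  Gaux n (pat n a) (pat n (1 - a)) a

/-! ### Measurability -/

lemma matrixMS_eq_pi (n : ℕ) :
    (matrixMeasurableSpace n : MeasurableSpace (Fin n → Fin n → ℂ)) = MeasurableSpace.pi := by
  rw [(inferInstance : BorelSpace (Fin n → Fin n → ℂ)).measurable_eq]
  rfl

lemma measurable_matrix_entries {α : Type*} [MeasurableSpace α] {n : ℕ}
    {f : α → Matrix (Fin n) (Fin n) ℂ} (h : ∀ i j, Measurable fun a => f a i j) :
    Measurable f := by
  have h1 : Measurable (fun a i j => f a i j : α → Fin n → Fin n → ℂ) :=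
    measurable_pi_lambda _ fun i => measurable_pi_lambda _ fun j => h i j
  intro s hs
  exact h1 ((matrixMS_eq_pi n) ▸ hs)

lemma measurable_entry {α : Type*} [MeasurableSpace α] {n : ℕ}
    {f : α → Matrix (Fin n) (Fin n) ℂ} (hf : Measurable f) (i j : Fin n) :
    Measurable fun a => f a i j :=
  ((continuous_id.matrix_elem i j).measurable).comp hf

lemma measurable_mul' {α : Type*} [MeasurableSpace α] {n : ℕ}
    {f g : α → Matrix (Fin n) (Fin n) ℂ} (hf : Measurable f) (hg : Measurable g) :
    Measurable fun a => f a * g a := by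
  refine measurable_matrix_entries fun i j => ?_
  simp only [Matrix.mul_apply]
  exact Finset.measurable_sum _ fun k _ => (measurable_entry hf i k).mul (measurable_entry hg k j)

lemma measurable_conjTranspose {α : Type*} [MeasurableSpace α] {n : ℕ}
    {f : α → Matrix (Fin n) (Fin n) ℂ} (hf : Measurable f) :
    Measurable fun a => (f a)ᴴ := by
  refine measurable_matrix_entries fun i j => ?_
  exact Complex.continuous_conj.measurable.comp (measurable_entry hf j i)

lemma measurable_col (i : ℕ) : Measurable fun a : Matrix (Fin n) (Fin n) ℂ => col n a i := by
  unfold col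
  by_cases h : i < n
  · simp only [dif_pos h]
    refine Continuous.measurable ?_
    exact (PiLp.continuous_toLp 2 (fun _ : Fin n => ℂ)).comp
      (continuous_pi fun j => continuous_apply_apply j (⟨i, h⟩ : Fin n))
  · simp only [dif_neg h]; exact measurable_const

lemma measurable_gramSchmidt (n : ℕ) (i : ℕ) :
    Measurable fun v : ℕ → EuclideanSpace ℂ (Fin n) => gramSchmidt ℂ v i := by
  induction i using Nat.strong_induction_on with
  | _ i ih =>
  have heq : (fun v : ℕ → EuclideanSpace ℂ (Fin n) => gramSchmidt ℂ v i)
      = fun v => v i - ∑ j ∈ Finset.Iio i,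
        (((inner ℂ (gramSchmidt ℂ v j) (v i) : ℂ) / ((‖gramSchmidt ℂ v j‖ ^ 2 : ℝ) : ℂ))
          • gramSchmidt ℂ v j) := by
    funext v
    rw [gramSchmidt_def]
    congr 1
    exact Finset.sum_congr rfl fun j _ => starProjection_singleton ℂ (v i)
  rw [heq]
  refine (measurable_pi_apply i).sub (Finset.measurable_sum _ fun j hj => ?_)
  have hgs := ih j (Finset.mem_Iio.mp hj)
  have hinner : Measurable fun v : ℕ → EuclideanSpace ℂ (Fin n) =>
      (inner ℂ (gramSchmidt ℂ v j) (v i) : ℂ) :=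
    continuous_inner.measurable.comp (hgs.prodMk (measurable_pi_apply i))
  have hnrm : Measurable fun v : ℕ → EuclideanSpace ℂ (Fin n) =>
      ((‖gramSchmidt ℂ v j‖ ^ 2 : ℝ) : ℂ) :=
    Complex.measurable_ofReal.comp ((hgs.norm).pow_const 2)
  exact (hinner.div hnrm).smul hgs

lemma measurable_gsn (i : ℕ) : Measurable fun a : Matrix (Fin n) (Fin n) ℂ => gsn n a i := by
  have hcols : Measurable fun a : Matrix (Fin n) (Fin n) ℂ => col n a :=
    measurable_pi_lambda _ fun j => measurable_col j
  have h1 : Measurable fun v : ℕ → EuclideanSpace ℂ (Fin n) => gramSchmidtNormed ℂ v i := by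
    unfold gramSchmidtNormed
    exact ((Complex.measurable_ofReal.comp ((measurable_gramSchmidt n i).norm)).inv).smul
      (measurable_gramSchmidt n i)
  exact h1.comp hcols

lemma measurableSet_pat_eq (s : Finset ℕ) :
    MeasurableSet {a : Matrix (Fin n) (Fin n) ℂ | pat n a = s} := by
  classical
  by_cases hs : s ⊆ Finset.range n
  · have : {a : Matrix (Fin n) (Fin n) ℂ | pat n a = s}
        = ⋂ i ∈ Finset.range n, {a | i ∈ s ↔ gsn n a i ≠ 0} := by
      ext a
      simp only [Set.mem_setOf_eq, Set.mem_iInter]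
      constructor
      · rintro rfl i hi
        simp [pat, hi]
      · intro h
        ext i
        simp only [pat, Finset.mem_filter, Finset.mem_range]
        constructor
        · rintro ⟨hi, hne⟩; exact (h i (Finset.mem_range.mpr hi)).mpr hne
        · intro hi
          have hin : i < n := Finset.mem_range.mp (hs hi)
          exact ⟨hin, (h i (Finset.mem_range.mpr hin)).mp hi⟩
    rw [this]
    refine MeasurableSet.biInter (Finset.range n).countable_toSet fun i _ => ?_
    by_cases hi : i ∈ s
    · have : {a : Matrix (Fin n) (Fin n) ℂ | i ∈ s ↔ gsn n a i ≠ 0}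
          = {a | gsn n a i = 0}ᶜ := by
        ext a; simp [hi]
      rw [this]
      exact ((measurable_gsn i) (measurableSet_singleton 0)).compl
    · have : {a : Matrix (Fin n) (Fin n) ℂ | i ∈ s ↔ gsn n a i ≠ 0}
          = {a | gsn n a i = 0} := by
        ext a; simp [hi]
      rw [this]
      exact (measurable_gsn i) (measurableSet_singleton 0)
  · have : {a : Matrix (Fin n) (Fin n) ℂ | pat n a = s} = ∅ := by
      ext a
      simp only [Set.mem_setOf_eq, Set.mem_empty_iff_false, iff_false]
      rintro rfl
      exact hs (Finset.filter_subset _ _)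
    rw [this]; exact MeasurableSet.empty

lemma measurable_pieces {α γ ι : Type*} [MeasurableSpace α] [MeasurableSpace γ] [Countable ι]
    (π : α → ι) (hπ : ∀ i, MeasurableSet {a | π a = i}) (F : ι → α → γ)
    (hF : ∀ i, Measurable (F i)) : Measurable fun a => F (π a) a := by
  intro S hS
  have : (fun a => F (π a) a) ⁻¹' S = ⋃ i, {a | π a = i} ∩ F i ⁻¹' S := by
    ext a
    simp only [Set.mem_preimage, Set.mem_iUnion, Set.mem_inter_iff, Set.mem_setOf_eq]
    exact ⟨fun h => ⟨π a, rfl, h⟩, by rintro ⟨i, rfl, h⟩; exact h⟩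
  rw [this]
  exact MeasurableSet.iUnion fun i => (hπ i).inter (hF i hS)

lemma measurable_Gaux (s t : Finset ℕ) : Measurable (Gaux n s t) := by
  refine measurable_matrix_entries fun i j => ?_
  simp only [Gaux, Matrix.of_apply]
  by_cases h : (j : ℕ) < s.card
  · simp only [dif_pos h]
    exact (((continuous_apply i).comp
      (PiLp.continuous_ofLp 2 (fun _ : Fin n => ℂ))).measurable).comp (measurable_gsn _)
  · simp only [dif_neg h]
    by_cases h2 : (j : ℕ) - s.card < t.card
    · simp only [dif_pos h2]
      exact ((((continuous_apply i).comp
        (PiLp.continuous_ofLp 2 (fun _ : Fin n => ℂ))).measurable).comp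
          (measurable_gsn _)).comp (continuous_const.sub continuous_id).measurable
    · simp only [dif_neg h2]; exact measurable_const

lemma measurable_G : Measurable (G n) := by
  have h := measurable_pieces
    (fun a : Matrix (Fin n) (Fin n) ℂ => (pat n a, pat n (1 - a)))
    (fun st => by
      have : {a : Matrix (Fin n) (Fin n) ℂ | (pat n a, pat n (1 - a)) = st}
          = {a | pat n a = st.1} ∩ ((fun a : Matrix (Fin n) (Fin n) ℂ => 1 - a) ⁻¹'
              {a | pat n a = st.2}) := by
        ext a
        simp only [Set.mem_setOf_eq, Set.mem_inter_iff, Set.mem_preimage, Prod.ext_iff]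
      rw [this]
      exact (measurableSet_pat_eq st.1).inter
        ((continuous_const.sub continuous_id).measurable (measurableSet_pat_eq st.2)))
    (fun st a => Gaux n st.1 st.2 a) (fun st => measurable_Gaux st.1 st.2)
  exact h

lemma measurable_patCardFn {γ : Type*} [MeasurableSpace γ] (F : ℕ → γ) :
    Measurable fun a : Matrix (Fin n) (Fin n) ℂ => F (pat n a).card := by
  exact measurable_pieces (fun a => pat n a) measurableSet_pat_eq
    (fun s _ => F s.card) (fun s => measurable_const)

/-! ### Pointwise linear algebra -/

lemma gsn_eq_zero_of_ge (a : Matrix (Fin n) (Fin n) ℂ) {i : ℕ} (hi : n ≤ i) :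
    gsn n a i = 0 := by
  have hcol : col n a i = 0 := dif_neg (by omega)
  have hgs : gramSchmidt ℂ (col n a) i = 0 := by
    rw [gramSchmidt_def, hcol]
    simp
  unfold gsn gramSchmidtNormed
  rw [hgs]
  simp

lemma gsn_orth (a : Matrix (Fin n) (Fin n) ℂ) {i j : ℕ} (hij : i ≠ j) :
    (inner ℂ (gsn n a i) (gsn n a j) : ℂ) = 0 := by
  unfold gsn gramSchmidtNormed
  simp [inner_smul_left, inner_smul_right, gramSchmidt_orthogonal ℂ _ hij]

lemma gsn_unit (a : Matrix (Fin n) (Fin n) ℂ) {i : ℕ} (hi : i ∈ pat n a) :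
    (inner ℂ (gsn n a i) (gsn n a i) : ℂ) = 1 := by
  have hne : gsn n a i ≠ 0 := by
    classical
    exact (Finset.mem_filter.mp hi).2
  have hlen : ‖gsn n a i‖ = 1 := gramSchmidtNormed_unit_length' hne
  rw [inner_self_eq_norm_sq_to_K, hlen]
  norm_num

lemma gsn_mem_span (a : Matrix (Fin n) (Fin n) ℂ) (i : ℕ) :
    gsn n a i ∈ Submodule.span ℂ (Set.range (col n a)) := by
  unfold gsn gramSchmidtNormed
  refine Submodule.smul_mem _ _ ?_
  exact Submodule.span_mono (Set.image_subset_range _ _)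
    (gramSchmidt_mem_span ℂ (col n a) (le_refl i))

lemma span_gsn_eq (a : Matrix (Fin n) (Fin n) ℂ) :
    Submodule.span ℂ (Set.range (gsn n a)) = Submodule.span ℂ (Set.range (col n a)) := by
  unfold gsn
  rw [span_gramSchmidtNormed_range, span_gramSchmidt]

lemma span_gsn_pat_eq (a : Matrix (Fin n) (Fin n) ℂ) :
    Submodule.span ℂ (gsn n a '' ↑(pat n a)) = Submodule.span ℂ (Set.range (col n a)) := by
  classical
  apply le_antisymm
  · rw [← span_gsn_eq]
    exact Submodule.span_mono (Set.image_subset_range _ _)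
  · rw [← span_gsn_eq]
    have hsub : Set.range (gsn n a) ⊆ insert 0 (gsn n a '' ↑(pat n a)) := by
      rintro _ ⟨i, rfl⟩
      by_cases hi : i ∈ pat n a
      · exact Set.mem_insert_of_mem _ ⟨i, hi, rfl⟩
      · by_cases hin : i < n
        · have : gsn n a i = 0 := by
            by_contra hne
            exact hi (Finset.mem_filter.mpr ⟨Finset.mem_range.mpr hin, hne⟩)
          rw [this]; exact Set.mem_insert _ _
        · rw [gsn_eq_zero_of_ge a (le_of_not_gt hin)]; exact Set.mem_insert _ _
    calc Submodule.span ℂ (Set.range (gsn n a))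
        ≤ Submodule.span ℂ (insert 0 (gsn n a '' ↑(pat n a))) := Submodule.span_mono hsub
      _ = Submodule.span ℂ (gsn n a '' ↑(pat n a)) := Submodule.span_insert_zero

lemma eL_symm_apply (x : Fin n → ℂ) :
    (WithLp.linearEquiv 2 ℂ (Fin n → ℂ)) ((WithLp.equiv 2 (Fin n → ℂ)).symm x) = x := rfl

lemma span_col_map_eq (a : Matrix (Fin n) (Fin n) ℂ) :
    Submodule.map ((WithLp.linearEquiv 2 ℂ (Fin n → ℂ)) : _ →ₗ[ℂ] (Fin n → ℂ))
      (Submodule.span ℂ (Set.range (col n a))) = LinearMap.range a.mulVecLin := by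
  rw [Submodule.map_span, Matrix.range_mulVecLin]
  apply le_antisymm
  · rw [Submodule.span_le]
    rintro _ ⟨_, ⟨i, rfl⟩, rfl⟩
    by_cases hi : i < n
    · exact Submodule.subset_span ⟨⟨i, hi⟩, by rw [col, dif_pos hi]; rfl⟩
    · have : col n a i = 0 := dif_neg hi
      rw [this, map_zero]
      exact Submodule.zero_mem _
  · rw [Submodule.span_le]
    rintro _ ⟨j, rfl⟩
    refine Submodule.subset_span ⟨col n a (j : ℕ), ⟨(j : ℕ), rfl⟩, ?_⟩
    rw [col, dif_pos j.isLt]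
    rfl

lemma finrank_span_col (a : Matrix (Fin n) (Fin n) ℂ) :
    Module.finrank ℂ (Submodule.span ℂ (Set.range (col n a))) = a.rank := by
  rw [Matrix.rank, ← span_col_map_eq a]
  exact (LinearEquiv.finrank_map_eq (WithLp.linearEquiv 2 ℂ (Fin n → ℂ))
    (Submodule.span ℂ (Set.range (col n a)))).symm

lemma pat_card (a : Matrix (Fin n) (Fin n) ℂ) : (pat n a).card = a.rank := by
  classical
  have o2 : Orthonormal ℂ (fun i : ↥(pat n a) => gsn n a i) := by
    constructor
    · intro i
      exact gramSchmidtNormed_unit_length' (Finset.mem_filter.mp i.2).2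
    · intro i j hij
      exact gsn_orth a (fun h => hij (Subtype.ext h))
  have hrange : Set.range (fun i : ↥(pat n a) => gsn n a i) = gsn n a '' ↑(pat n a) := by
    ext x
    simp
  have := finrank_span_eq_card o2.linearIndependent
  rw [hrange, span_gsn_pat_eq, finrank_span_col] at this
  rw [this]
  exact (Fintype.card_coe _).symm

lemma range_one_sub_eq_ker {a : Matrix (Fin n) (Fin n) ℂ} (h2 : a * a = a) :
    LinearMap.range (1 - a).mulVecLin = LinearMap.ker a.mulVecLin := by
  have hmul : a * (1 - a) = 0 := by
    rw [mul_sub, mul_one, h2, sub_self]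
  ext x
  constructor
  · rintro ⟨y, rfl⟩
    simp only [LinearMap.mem_ker, Matrix.mulVecLin_apply, Matrix.mulVec_mulVec, hmul,
      Matrix.zero_mulVec]
  · intro hx
    simp only [LinearMap.mem_ker, Matrix.mulVecLin_apply] at hx
    exact ⟨x, by simp only [Matrix.mulVecLin_apply, Matrix.sub_mulVec, Matrix.one_mulVec, hx,
      sub_zero]⟩

lemma pat_card_add {a : Matrix (Fin n) (Fin n) ℂ} (h2 : a * a = a) :
    (pat n a).card + (pat n (1 - a)).card = n := by
  rw [pat_card, pat_card, Matrix.rank, Matrix.rank, range_one_sub_eq_ker h2]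
  have := LinearMap.finrank_range_add_finrank_ker a.mulVecLin
  rw [Module.finrank_pi, Fintype.card_fin] at this
  exact this

lemma mulVec_of_mem_span_col {a : Matrix (Fin n) (Fin n) ℂ} (h2 : a * a = a)
    {x : EuclideanSpace ℂ (Fin n)} (hx : x ∈ Submodule.span ℂ (Set.range (col n a))) :
    a *ᵥ (WithLp.equiv 2 (Fin n → ℂ)) x = (WithLp.equiv 2 (Fin n → ℂ)) x := by
  set eL := (WithLp.linearEquiv 2 ℂ (Fin n → ℂ))
  set T := (a.mulVecLin - LinearMap.id).comp eL.toLinearMap with hT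
  have hmem : x ∈ LinearMap.ker T := by
    refine Submodule.span_le.mpr ?_ hx
    rintro _ ⟨i, rfl⟩
    simp only [SetLike.mem_coe, LinearMap.mem_ker, hT, LinearMap.comp_apply,
      LinearMap.sub_apply, Matrix.mulVecLin_apply, LinearMap.id_apply]
    by_cases hi : i < n
    · rw [col, dif_pos hi]
      show a *ᵥ (fun j => a j ⟨i, hi⟩) - (fun j => a j ⟨i, hi⟩) = 0
      have hcol : (fun j => a j ⟨i, hi⟩) = a *ᵥ Pi.single ⟨i, hi⟩ 1 := by
        funext j
        rw [Matrix.mulVec_single]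
        simp
      rw [hcol, Matrix.mulVec_mulVec, h2, sub_self]
    · rw [col, dif_neg hi]
      simp
  have := LinearMap.mem_ker.mp hmem
  rw [hT] at this
  simp only [LinearMap.comp_apply, LinearMap.sub_apply, Matrix.mulVecLin_apply,
    LinearMap.id_apply, sub_eq_zero] at this
  exact this

lemma mulVec_zero_of_mem_span_col {a : Matrix (Fin n) (Fin n) ℂ} (h2 : a * a = a)
    {x : EuclideanSpace ℂ (Fin n)}
    (hx : x ∈ Submodule.span ℂ (Set.range (col n (1 - a)))) :
    a *ᵥ (WithLp.equiv 2 (Fin n → ℂ)) x = 0 := by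
  set eL := (WithLp.linearEquiv 2 ℂ (Fin n → ℂ))
  set T := a.mulVecLin.comp eL.toLinearMap with hT
  have hmul : a * (1 - a) = 0 := by rw [mul_sub, mul_one, h2, sub_self]
  have hmem : x ∈ LinearMap.ker T := by
    refine Submodule.span_le.mpr ?_ hx
    rintro _ ⟨i, rfl⟩
    simp only [SetLike.mem_coe, LinearMap.mem_ker, hT, LinearMap.comp_apply,
      Matrix.mulVecLin_apply]
    by_cases hi : i < n
    · rw [col, dif_pos hi]
      show a *ᵥ (fun j => (1 - a) j ⟨i, hi⟩) = 0
      have hcol : (fun j => (1 - a) j ⟨i, hi⟩) = (1 - a) *ᵥ Pi.single ⟨i, hi⟩ 1 := by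
        funext j
        rw [Matrix.mulVec_single]
        simp
      rw [hcol, Matrix.mulVec_mulVec, hmul, Matrix.zero_mulVec]
    · rw [col, dif_neg hi]
      simp
  have := LinearMap.mem_ker.mp hmem
  rw [hT] at this
  simp only [LinearMap.comp_apply, Matrix.mulVecLin_apply] at this
  exact this

lemma inner_eq_dot (x y : EuclideanSpace ℂ (Fin n)) :
    (inner ℂ x y : ℂ) = star ((WithLp.equiv 2 (Fin n → ℂ)) x) ⬝ᵥ ((WithLp.equiv 2 (Fin n → ℂ)) y) := by
  simp [PiLp.inner_apply, RCLike.inner_apply, dotProduct, mul_comm]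

lemma inner_cross_zero {a : Matrix (Fin n) (Fin n) ℂ} (hh : aᴴ = a)
    {x y : EuclideanSpace ℂ (Fin n)}
    (hx : a *ᵥ (WithLp.equiv 2 (Fin n → ℂ)) x = (WithLp.equiv 2 (Fin n → ℂ)) x)
    (hy : a *ᵥ (WithLp.equiv 2 (Fin n → ℂ)) y = 0) :
    (inner ℂ x y : ℂ) = 0 ∧ (inner ℂ y x : ℂ) = 0 := by
  have h1 : (inner ℂ x y : ℂ) = 0 := by
    rw [inner_eq_dot, ← hx, Matrix.star_mulVec, hh, ← Matrix.dotProduct_mulVec, hy,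
      dotProduct_zero]
  refine ⟨h1, ?_⟩
  rw [← inner_conj_symm, h1, map_zero]



/-- The `j`-th column of `Gaux n s t a` as a Euclidean vector. -/
noncomputable def cvec (n : ℕ) (s t : Finset ℕ) (a : Matrix (Fin n) (Fin n) ℂ) (j : Fin n) :
    EuclideanSpace ℂ (Fin n) :=
  (WithLp.equiv 2 (Fin n → ℂ)).symm (fun i => Gaux n s t a i j)

lemma cvec_lt {s t : Finset ℕ} {a : Matrix (Fin n) (Fin n) ℂ} {j : Fin n}
    (h : (j : ℕ) < s.card) :
    cvec n s t a j = gsn n a (s.orderEmbOfFin rfl ⟨(j : ℕ), h⟩) := by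
  ext i
  show Gaux n s t a i j = gsn n a (s.orderEmbOfFin rfl ⟨(j : ℕ), h⟩) i
  simp only [Gaux, Matrix.of_apply, dif_pos h]

lemma cvec_ge {s t : Finset ℕ} {a : Matrix (Fin n) (Fin n) ℂ} {j : Fin n}
    (h : ¬(j : ℕ) < s.card) (h2 : (j : ℕ) - s.card < t.card) :
    cvec n s t a j = gsn n (1 - a) (t.orderEmbOfFin rfl ⟨(j : ℕ) - s.card, h2⟩) := by
  ext i
  show Gaux n s t a i j = gsn n (1 - a) (t.orderEmbOfFin rfl ⟨(j : ℕ) - s.card, h2⟩) i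
  simp only [Gaux, Matrix.of_apply, dif_neg h, dif_pos h2]

theorem key {a : Matrix (Fin n) (Fin n) ℂ} (h2 : a * a = a) (hh : aᴴ = a) :
    (G n a)ᴴ * G n a = 1 ∧
      (G n a)ᴴ * a * G n a =
        Matrix.of (fun i j : Fin n => if i = j ∧ (j : ℕ) < a.rank then 1 else 0) ∧
      (pat n a).card = a.rank := by
  classical
  set s := pat n a with hs
  set t := pat n (1 - a) with ht
  have hcard : s.card = a.rank := pat_card a
  have hsum : s.card + t.card = n := pat_card_add h2
  set c : Fin n → EuclideanSpace ℂ (Fin n) := cvec n s t a with hc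
  have hG : ∀ i j, G n a i j = c j i := fun i j => rfl
  have hclt : ∀ (j : Fin n), (j : ℕ) < s.card →
      a *ᵥ (WithLp.equiv 2 (Fin n → ℂ)) (c j) = (WithLp.equiv 2 (Fin n → ℂ)) (c j) := by
    intro j h
    rw [hc, cvec_lt h]
    exact mulVec_of_mem_span_col h2 (gsn_mem_span a _)
  have hcge : ∀ (j : Fin n), ¬(j : ℕ) < s.card →
      a *ᵥ (WithLp.equiv 2 (Fin n → ℂ)) (c j) = 0 := by
    intro j h
    have hj := j.isLt
    rw [hc, cvec_ge h (by omega)]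
    exact mulVec_zero_of_mem_span_col h2 (gsn_mem_span (1 - a) _)
  have hinner : ∀ x y : Fin n, (inner ℂ (c x) (c y) : ℂ) = if x = y then 1 else 0 := by
    intro x y
    by_cases hx : (x : ℕ) < s.card <;> by_cases hy : (y : ℕ) < s.card
    · rw [hc, cvec_lt hx, cvec_lt hy]
      by_cases hxy : x = y
      · subst hxy
        rw [if_pos rfl]
        exact gsn_unit a (Finset.orderEmbOfFin_mem s rfl _)
      · rw [if_neg hxy]
        refine gsn_orth a ?_
        intro hcontra
        have h1 := (s.orderEmbOfFin rfl).injective hcontra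
        exact hxy (Fin.ext (by simpa using congrArg Fin.val h1))
    · rw [if_neg (fun (hxy : x = y) => hy (hxy ▸ hx))]
      exact (inner_cross_zero hh (hclt x hx) (hcge y hy)).1
    · rw [if_neg (fun (hxy : x = y) => hx (hxy ▸ hy))]
      exact (inner_cross_zero hh (hclt y hy) (hcge x hx)).2
    · have hx' : (x : ℕ) - s.card < t.card := by have := x.isLt; omega
      have hy' : (y : ℕ) - s.card < t.card := by have := y.isLt; omega
      rw [hc, cvec_ge hx hx', cvec_ge hy hy']
      by_cases hxy : x = y
      · subst hxy
        rw [if_pos rfl]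
        exact gsn_unit (1 - a) (Finset.orderEmbOfFin_mem t rfl _)
      · rw [if_neg hxy]
        refine gsn_orth (1 - a) ?_
        intro hcontra
        have h1 := (t.orderEmbOfFin rfl).injective hcontra
        have hval : (x : ℕ) - s.card = (y : ℕ) - s.card := by
          simpa using congrArg Fin.val h1
        exact hxy (Fin.ext (by omega))
  have hsum_eq : ∀ x y : Fin n, (∑ l, star (c x l) * c y l) = (inner ℂ (c x) (c y) : ℂ) := by
    intro x y
    rw [PiLp.inner_apply]
    exact Finset.sum_congr rfl fun l _ => by rw [RCLike.inner_apply, mul_comm]; rfl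
  have hGG : (G n a)ᴴ * G n a = 1 := by
    ext x y
    rw [Matrix.mul_apply, Matrix.one_apply]
    calc ∑ l, (G n a)ᴴ x l * G n a l y
        = ∑ l, star (c x l) * c y l := by
          refine Finset.sum_congr rfl fun l _ => ?_
          rw [Matrix.conjTranspose_apply, hG l x, hG l y]
      _ = (inner ℂ (c x) (c y) : ℂ) := hsum_eq x y
      _ = if x = y then 1 else 0 := hinner x y
  have haG : ∀ (l y : Fin n),
      (a * G n a) l y = (a *ᵥ (WithLp.equiv 2 (Fin n → ℂ)) (c y)) l := by
    intro l y
    rw [Matrix.mul_apply]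
    simp only [Matrix.mulVec, dotProduct]
    exact Finset.sum_congr rfl fun m _ => by rw [hG m y]; rfl
  have hDG : (G n a)ᴴ * a * G n a =
      Matrix.of (fun i j : Fin n => if i = j ∧ (j : ℕ) < a.rank then 1 else 0) := by
    rw [Matrix.mul_assoc]
    ext x y
    rw [Matrix.mul_apply, Matrix.of_apply]
    by_cases hy : (y : ℕ) < s.card
    · have hcol : ∀ l, (a * G n a) l y = c y l := by
        intro l
        rw [haG, hclt y hy]
        rfl
      calc ∑ l, (G n a)ᴴ x l * (a * G n a) l y
          = ∑ l, star (c x l) * c y l := by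
            refine Finset.sum_congr rfl fun l _ => ?_
            rw [Matrix.conjTranspose_apply, hG l x, hcol l]
        _ = (inner ℂ (c x) (c y) : ℂ) := hsum_eq x y
        _ = if x = y then 1 else 0 := hinner x y
        _ = if x = y ∧ (y : ℕ) < a.rank then 1 else 0 := by
            rw [← hcard]
            by_cases hxy : x = y <;> simp [hxy, hy]
    · have hz : ∀ l, (a * G n a) l y = 0 := by
        intro l
        rw [haG, hcge y hy]
        rfl
      have hzero : ∑ l, (G n a)ᴴ x l * (a * G n a) l y = 0 := by
        refine Finset.sum_eq_zero fun l _ => ?_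
        rw [hz l, mul_zero]
      rw [hzero, ← hcard]
      simp [hy]
  exact ⟨hGG, hDG, hcard⟩


end ProjTriv

/-- Every measurable field of projections `f : Ω → M_n(ℂ)` is measurably unitarily
equivalent to a field taking values in a fixed finite set `{0 = r₀, r₁, …, r_{n-1}, rₙ = 1}`
of projections, where `r_k` has rank `k`. -/

theorem measurable_field_of_projections_unitarily_trivialized
    (Ω : Type*) [MeasurableSpace Ω] (n : ℕ)
    (f : Ω → Matrix (Fin n) (Fin n) ℂ) (hf : Measurable f)
    (hproj : ∀ ω, f ω * f ω = f ω ∧ (f ω)ᴴ = f ω)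
    (r : ℕ → Matrix (Fin n) (Fin n) ℂ)
    (hr : ∀ k ≤ n, r k * r k = r k ∧ (r k)ᴴ = r k ∧ (r k).rank = k)
    (hr0 : r 0 = 0) (hrn : r n = 1) :
    ∃ u : Ω → Matrix (Fin n) (Fin n) ℂ,
      Measurable u ∧
      ∀ ω : Ω, (u ω)ᴴ * u ω = 1 ∧ u ω * (u ω)ᴴ = 1 ∧
        (u ω)ᴴ * f ω * u ω = r ((f ω).rank) := by
  classical
  refine ⟨fun ω => ProjTriv.G n (f ω) * (ProjTriv.G n (r ((ProjTriv.pat n (f ω)).card)))ᴴ,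
    ?_, ?_⟩
  · refine ProjTriv.measurable_mul' (ProjTriv.measurable_G.comp hf) ?_
    exact ProjTriv.measurable_conjTranspose
      ((ProjTriv.measurable_patCardFn (fun k => ProjTriv.G n (r k))).comp hf)
  · intro ω
    dsimp only
    obtain ⟨hp2, hph⟩ := hproj ω
    set p := f ω with hpdef
    have hkn : p.rank ≤ n := by
      have := p.rank_le_card_width
      simpa using this
    obtain ⟨hq2, hqh, hqrank⟩ := hr p.rank hkn
    set q := r p.rank with hqdef
    obtain ⟨hGGp, hDp, hcardp⟩ := ProjTriv.key hp2 hph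
    obtain ⟨hGGq, hDq, _⟩ := ProjTriv.key hq2 hqh
    rw [hqrank] at hDq
    set Gp := ProjTriv.G n p with hGp
    set Gq := ProjTriv.G n q with hGq
    have hGpGpT : Gp * Gpᴴ = 1 := mul_eq_one_comm.mp hGGp
    have hGqGqT : Gq * Gqᴴ = 1 := mul_eq_one_comm.mp hGGq
    rw [hcardp]
    refine ⟨?_, ?_, ?_⟩
    · rw [Matrix.conjTranspose_mul, Matrix.conjTranspose_conjTranspose]
      calc Gq * Gpᴴ * (Gp * Gqᴴ)
          = Gq * (Gpᴴ * (Gp * Gqᴴ)) := Matrix.mul_assoc _ _ _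
        _ = Gq * (Gpᴴ * Gp * Gqᴴ) := by rw [Matrix.mul_assoc Gpᴴ Gp Gqᴴ]
        _ = Gq * (1 * Gqᴴ) := by rw [hGGp]
        _ = Gq * Gqᴴ := by rw [Matrix.one_mul]
        _ = 1 := hGqGqT
    · rw [Matrix.conjTranspose_mul, Matrix.conjTranspose_conjTranspose]
      calc Gp * Gqᴴ * (Gq * Gpᴴ)
          = Gp * (Gqᴴ * (Gq * Gpᴴ)) := Matrix.mul_assoc _ _ _
        _ = Gp * (Gqᴴ * Gq * Gpᴴ) := by rw [Matrix.mul_assoc Gqᴴ Gq Gpᴴ]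
        _ = Gp * (1 * Gpᴴ) := by rw [hGGq]
        _ = Gp * Gpᴴ := by rw [Matrix.one_mul]
        _ = 1 := hGpGpT
    · rw [Matrix.conjTranspose_mul, Matrix.conjTranspose_conjTranspose]
      calc Gq * Gpᴴ * p * (Gp * Gqᴴ)
          = Gq * ((Gpᴴ * p * Gp) * Gqᴴ) := by
            rw [Matrix.mul_assoc Gq Gpᴴ p, Matrix.mul_assoc Gq (Gpᴴ * p) (Gp * Gqᴴ),
              ← Matrix.mul_assoc (Gpᴴ * p) Gp Gqᴴ]
        _ = Gq * ((Gqᴴ * q * Gq) * Gqᴴ) := by rw [hDp, ← hDq]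
        _ = Gq * (Gqᴴ * q * (Gq * Gqᴴ)) := by
            rw [Matrix.mul_assoc (Gqᴴ * q) Gq Gqᴴ]
        _ = Gq * (Gqᴴ * q) := by rw [hGqGqT, Matrix.mul_one]
        _ = (Gq * Gqᴴ) * q := (Matrix.mul_assoc _ _ _).symm
        _ = q := by rw [hGqGqT, Matrix.one_mul]
end
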